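/- Let B ≥ 0, let α ∈ (1/2, 1), and define f(x) = log(α·σ(x) + (1−α)·(1−σ(x))) for x ∈ [−B, B], where σ(x) = 1/(1+e^{−x}) is the sigmoid function. Then for any a, b ∈ [−B, B], |f(a) − f(b)| ≤ σ(B)·|a − b|. -/

import Mathlib

noncomputable def sigmoid (x : ℝ) : ℝ := 1 / (1 + Real.exp (-x))

lemma sigmoid_pos (x : ℝ) : 0 < sigmoid x := by
  unfold sigmoid; positivity

lemma sigmoid_lt_one (x : ℝ) : sigmoid x < 1 := by
  unfold sigmoid
  rw [div_lt_one (by positivity)]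
  linarith [Real.exp_pos (-x)]

lemma sigmoid_mono {x y : ℝ} (h : x ≤ y) : sigmoid x ≤ sigmoid y := by
  unfold sigmoid
  apply one_div_le_one_div_of_le (by positivity)
  have := Real.exp_le_exp.mpr (neg_le_neg h)
  linarith

lemma one_sub_sigmoid (x : ℝ) : 1 - sigmoid x = sigmoid (-x) := by
  unfold sigmoid
  rw [neg_neg]
  have h1 : (0:ℝ) < 1 + Real.exp (-x) := by positivity
  have h2 : (0:ℝ) < 1 + Real.exp x := by positivity
  have hx : Real.exp x * Real.exp (-x) = 1 := by
    rw [← Real.exp_add]; simp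
  field_simp
  nlinarith

lemma hasDerivAt_sigmoid (x : ℝ) :
    HasDerivAt sigmoid (sigmoid x * (1 - sigmoid x)) x := by
  have hu : (0:ℝ) < 1 + Real.exp (-x) := by positivity
  have h1 : HasDerivAt (fun y : ℝ => 1 + Real.exp (-y)) (-Real.exp (-x)) x := by
    have := (Real.hasDerivAt_exp (-x)).comp x (hasDerivAt_neg x)
    exact ((hasDerivAt_const x (1:ℝ)).add this).congr_deriv (by ring)
  have h2 := h1.inv (ne_of_gt hu)
  have heq : sigmoid = fun y => (1 + Real.exp (-y))⁻¹ := by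
    funext y; simp [sigmoid, one_div]
  rw [heq]
  refine h2.congr_deriv ?_
  have hu' : (1 + Real.exp (-x)) ≠ 0 := ne_of_gt hu
  field_simp
  ring

theorem stmt_0 (B : ℝ) (hB : 0 ≤ B) (α : ℝ) (hα : α ∈ Set.Ioo (1/2 : ℝ) 1)
    (f : ℝ → ℝ)
    (hf : ∀ x, f x = Real.log (α * sigmoid x + (1 - α) * (1 - sigmoid x)))
    (a b : ℝ) (ha : a ∈ Set.Icc (-B) B) (hb : b ∈ Set.Icc (-B) B) :
    |f a - f b| ≤ sigmoid B * |a - b| := by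
  obtain ⟨hα1, hα2⟩ := hα
  set g : ℝ → ℝ := fun x =>
    (2*α - 1) * (sigmoid x * (1 - sigmoid x)) /
      (α * sigmoid x + (1 - α) * (1 - sigmoid x)) with hg
  have hden : ∀ x : ℝ, 0 < α * sigmoid x + (1 - α) * (1 - sigmoid x) := by
    intro x
    have h1 := sigmoid_pos x
    have h2 := sigmoid_lt_one x
    nlinarith
  have hderiv : ∀ x : ℝ, HasDerivAt f (g x) x := by
    intro x
    have hs := hasDerivAt_sigmoid x
    have hin : HasDerivAt (fun y => α * sigmoid y + (1 - α) * (1 - sigmoid y))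
        ((2*α - 1) * (sigmoid x * (1 - sigmoid x))) x := by
      have h1 := hs.const_mul α
      have h2 := ((hasDerivAt_const x (1:ℝ)).sub hs).const_mul (1 - α)
      exact (h1.add h2).congr_deriv (by ring)
    have hlog := hin.log (ne_of_gt (hden x))
    have : f = fun y => Real.log (α * sigmoid y + (1 - α) * (1 - sigmoid y)) := by
      funext y; exact hf y
    rw [this, hg]
    exact hlog
  have hbound : ∀ x ∈ Set.Icc (-B) B, ‖g x‖ ≤ sigmoid B := by
    intro x hx
    have h1 := sigmoid_pos x
    have h2 := sigmoid_lt_one x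
    have hd := hden x
    have hgnn : 0 ≤ g x := by
      rw [hg]
      apply div_nonneg _ (le_of_lt hd)
      apply mul_nonneg (by linarith)
      nlinarith
    rw [Real.norm_eq_abs, abs_of_nonneg hgnn, hg]
    have step1 : (2*α - 1) * (sigmoid x * (1 - sigmoid x)) /
        (α * sigmoid x + (1 - α) * (1 - sigmoid x)) ≤ 1 - sigmoid x := by
      rw [div_le_iff₀ hd]
      nlinarith
    have step2 : 1 - sigmoid x ≤ sigmoid B := by
      rw [one_sub_sigmoid]
      exact sigmoid_mono (by linarith [hx.1])
    linarith
  have hconv : Convex ℝ (Set.Icc (-B) B) := convex_Icc _ _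
  have := hconv.norm_image_sub_le_of_norm_hasDerivWithin_le
    (fun x _ => (hderiv x).hasDerivWithinAt) hbound hb ha
  simpa [Real.norm_eq_abs, abs_sub_comm] using this
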